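/- Γ̂ is generated by the four matrices Ã, T̃, E₁, E₂: the subgroup of GL(4, ZMod 5) generated by {Ã, T̃, E₁, E₂} has exactly Γ̂ as its underlying set of matrices. -/
import Mathlib


open Matrix

instance : Fact (Nat.Prime 5) := ⟨by norm_num⟩

/-- The reduction mod 5 of `P⁻¹A⁻¹P`. -/
def Atil : Matrix (Fin 4) (Fin 4) (ZMod 5) :=
  !![1, 1, 0, 0; 0, 1, 1, 4; 0, 0, 1, 4; 0, 0, 0, 1]

/-- The reduction mod 5 of `P⁻¹T⁻¹P`. -/
def Ttil : Matrix (Fin 4) (Fin 4) (ZMod 5) :=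
  !![1, 0, 0, 0; 0, 1, 0, 0; 0, 0, 1, 1; 0, 0, 0, 1]

def E₁ : Matrix (Fin 4) (Fin 4) (ZMod 5) :=
  !![1, 0, 0, 1; 0, 1, 0, 0; 0, 0, 1, 0; 0, 0, 0, 1]

def E₂ : Matrix (Fin 4) (Fin 4) (ZMod 5) :=
  !![1, 0, 0, 0; 0, 1, 0, 1; 0, 0, 1, 0; 0, 0, 0, 1]

def AtilGL : GL (Fin 4) (ZMod 5) :=
  Matrix.GeneralLinearGroup.mkOfDetNeZero Atil (by decide)

def TtilGL : GL (Fin 4) (ZMod 5) :=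
  Matrix.GeneralLinearGroup.mkOfDetNeZero Ttil (by decide)

def E₁GL : GL (Fin 4) (ZMod 5) :=
  Matrix.GeneralLinearGroup.mkOfDetNeZero E₁ (by decide)

def E₂GL : GL (Fin 4) (ZMod 5) :=
  Matrix.GeneralLinearGroup.mkOfDetNeZero E₂ (by decide)

/-- The general Γ̂ matrix. -/
def Nmat (n a b c : ZMod 5) : Matrix (Fin 4) (Fin 4) (ZMod 5) :=
  !![1, n, 3 * n ^ 2 + 2 * n, a; 0, 1, n, b; 0, 0, 1, c; 0, 0, 0, 1]

lemma Nmat_congr {n a b c n' a' b' c' : ZMod 5} (h1 : n = n') (h2 : a = a')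
    (h3 : b = b') (h4 : c = c') : Nmat n a b c = Nmat n' a' b' c' := by
  rw [h1, h2, h3, h4]

set_option maxHeartbeats 2000000 in
lemma Nmat_mul (n a b c n' a' b' c' : ZMod 5) :
    Nmat n a b c * Nmat n' a' b' c' =
      Nmat (n + n') (a + n * b' + (3 * n ^ 2 + 2 * n) * c' + a') (b + n * c' + b') (c + c') := by
  have h5 : (5 : ZMod 5) = 0 := rfl
  ext i j
  fin_cases i <;> fin_cases j <;>
    simp [Nmat, Matrix.mul_apply, Fin.sum_univ_four, Matrix.vecHead, Matrix.vecTail,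
      Function.comp]
  all_goals try ring
  all_goals linear_combination (-(n * n') : ZMod 5) * h5

lemma Nmat_one : Nmat 0 0 0 0 = 1 := by decide

lemma Ttil_pow (k : ZMod 5) : Ttil ^ k.val = Nmat 0 0 0 k := by fin_cases k <;> decide

lemma E₁_pow (k : ZMod 5) : E₁ ^ k.val = Nmat 0 k 0 0 := by fin_cases k <;> decide

lemma E₂_pow (k : ZMod 5) : E₂ ^ k.val = Nmat 0 0 k 0 := by fin_cases k <;> decide

lemma Atil_pow (k : ZMod 5) : ∃ a b c, Atil ^ k.val = Nmat k a b c := by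
  fin_cases k
  · exact ⟨0, 0, 0, by decide⟩
  · exact ⟨0, 4, 4, by decide⟩
  · exact ⟨4, 2, 3, by decide⟩
  · exact ⟨1, 4, 2, by decide⟩
  · exact ⟨0, 0, 1, by decide⟩

/-- `Γ̂` is generated by the four matrices `Ã`, `T̃`, `E₁`, `E₂`. -/
theorem gammaHat_generated (X : GL (Fin 4) (ZMod 5)) :
    X ∈ Subgroup.closure {AtilGL, TtilGL, E₁GL, E₂GL} ↔
      ∃ n a b c : ZMod 5,
        (X : Matrix (Fin 4) (Fin 4) (ZMod 5)) =
          !![1, n, 3 * n ^ 2 + 2 * n, a; 0, 1, n, b; 0, 0, 1, c; 0, 0, 0, 1] := by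
  constructor
  · intro hX
    induction hX using Subgroup.closure_induction with
    | mem x hx =>
      rcases hx with rfl | rfl | rfl | rfl
      · exact ⟨1, 0, 4, 4, by decide⟩
      · exact ⟨0, 0, 0, 1, by decide⟩
      · exact ⟨0, 1, 0, 0, by decide⟩
      · exact ⟨0, 0, 1, 0, by decide⟩
    | one => exact ⟨0, 0, 0, 0, by decide⟩
    | mul x y hx hy ihx ihy =>
      obtain ⟨n, a, b, c, hx'⟩ := ihx
      obtain ⟨n', a', b', c', hy'⟩ := ihy
      exact ⟨n + n', a + n * b' + (3 * n ^ 2 + 2 * n) * c' + a', b + n * c' + b', c + c',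
        by rw [Units.val_mul, hx', hy', ← Nmat, ← Nmat, Nmat_mul]; rfl⟩
    | inv x hx ihx =>
      obtain ⟨n, a, b, c, hx'⟩ := ihx
      rw [← Nmat] at hx'
      refine ⟨-n, -a + n * b + (2 * n ^ 2 + 2 * n) * c, -b + n * c, -c, ?_⟩
      have key : (x : Matrix (Fin 4) (Fin 4) (ZMod 5)) *
          Nmat (-n) (-a + n * b + (2 * n ^ 2 + 2 * n) * c) (-b + n * c) (-c) = 1 := by
        rw [hx', Nmat_mul, Nmat_congr (n' := 0) (a' := 0) (b' := 0) (c' := 0)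
          (by ring) (by ring) (by ring) (by ring), Nmat_one]
      have h2 : ((x⁻¹ : GL (Fin 4) (ZMod 5)) : Matrix (Fin 4) (Fin 4) (ZMod 5)) *
          ((x : GL (Fin 4) (ZMod 5)) : Matrix (Fin 4) (Fin 4) (ZMod 5)) = 1 := by
        rw [← Units.val_mul, inv_mul_cancel, Units.val_one]
      calc ((x⁻¹ : GL (Fin 4) (ZMod 5)) : Matrix (Fin 4) (Fin 4) (ZMod 5))
          = ((x⁻¹ : GL (Fin 4) (ZMod 5)) : Matrix (Fin 4) (Fin 4) (ZMod 5)) *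
            (((x : GL (Fin 4) (ZMod 5)) : Matrix (Fin 4) (Fin 4) (ZMod 5)) *
            Nmat (-n) (-a + n * b + (2 * n ^ 2 + 2 * n) * c) (-b + n * c) (-c)) := by
            rw [key, mul_one]
        _ = Nmat (-n) (-a + n * b + (2 * n ^ 2 + 2 * n) * c) (-b + n * c) (-c) := by
            rw [← mul_assoc, h2, one_mul]
  · rintro ⟨n, a, b, c, hX⟩
    rw [← Nmat] at hX
    obtain ⟨a₀, b₀, c₀, hA⟩ := Atil_pow n
    set c' : ZMod 5 := c - c₀ with hc'
    set b' : ZMod 5 := b - b₀ - n * c' with hb'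
    set a' : ZMod 5 := a - a₀ - n * b' - (3 * n ^ 2 + 2 * n) * c' with ha'
    have hmem : AtilGL ^ n.val * TtilGL ^ c'.val * E₂GL ^ b'.val * E₁GL ^ a'.val ∈
        Subgroup.closure {AtilGL, TtilGL, E₁GL, E₂GL} := by
      refine mul_mem (mul_mem (mul_mem (pow_mem ?_ _) (pow_mem ?_ _)) (pow_mem ?_ _))
        (pow_mem ?_ _) <;>
        apply Subgroup.subset_closure <;> simp [Set.mem_insert_iff]
    have hcoe : ((AtilGL ^ n.val * TtilGL ^ c'.val * E₂GL ^ b'.val * E₁GL ^ a'.val :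
        GL (Fin 4) (ZMod 5)) : Matrix (Fin 4) (Fin 4) (ZMod 5)) = Nmat n a b c := by
      have : ((AtilGL ^ n.val * TtilGL ^ c'.val * E₂GL ^ b'.val * E₁GL ^ a'.val :
          GL (Fin 4) (ZMod 5)) : Matrix (Fin 4) (Fin 4) (ZMod 5)) =
          Atil ^ n.val * Ttil ^ c'.val * E₂ ^ b'.val * E₁ ^ a'.val := by
        simp [Units.val_mul, Units.val_pow_eq_pow_val]; rfl
      rw [this, hA, Ttil_pow, E₂_pow, E₁_pow, Nmat_mul, Nmat_mul, Nmat_mul]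
      exact Nmat_congr (by ring) (by rw [ha']; ring) (by rw [hb']; ring) (by rw [hc']; ring)
    have : X = AtilGL ^ n.val * TtilGL ^ c'.val * E₂GL ^ b'.val * E₁GL ^ a'.val :=
      Units.ext (by rw [hX, hcoe])
    rw [this]
    exact hmem
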